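/- arXiv:0807.1846 — 3 statements merged into one kernel-verified Lean document; each statement's English description precedes it below -/
import Mathlib

section
/- Existence of a strict smooth supersolution (Lemma 5.2): let κ ≥ 0 and define ψ(x) = (ln((|x|² + 1)^{1/2}) + 1)² for x ∈ ℝ^d. For every A > 0 there exists C > 0 such that the function χ(t,x) = exp((C(T − t) + A)·ψ(x)) satisfies, for all t ∈ [t₁,T] and all x ∈ ℝ^d, where t₁ = max(T − A/C, 0): −∂χ/∂t(t,x) − 𝓛χ(t,x) − κ·χ(t,x) − κ·|σ(t,x)^T ∇_x χ(t,x)| > 0. -/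
open Set Filter

noncomputable section

/-- Euclidean space `ℝ^d`. -/
abbrev EV (d : ℕ) := EuclideanSpace ℝ (Fin d)

/-- Partial derivative in time `∂φ/∂t`. -/
noncomputable def timeDeriv (d : ℕ) (φ : ℝ → EV d → ℝ) (t : ℝ) (x : EV d) : ℝ :=
  deriv (fun s => φ s x) t

/-- Partial derivative in space `∂φ/∂x_i`. -/
noncomputable def spaceDeriv (d : ℕ) (φ : ℝ → EV d → ℝ) (t : ℝ) (x : EV d) (i : Fin d) : ℝ :=
  fderiv ℝ (fun y => φ t y) x (EuclideanSpace.single i 1)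

/-- Second partial derivative in space `∂²φ/∂x_i∂x_j`. -/
noncomputable def spaceDeriv2 (d : ℕ) (φ : ℝ → EV d → ℝ) (t : ℝ) (x : EV d) (i j : Fin d) : ℝ :=
  fderiv ℝ (fun y => fderiv ℝ (fun z => φ t z) y (EuclideanSpace.single j 1)) x
    (EuclideanSpace.single i 1)

/-- `φ` is `C^{1,2}`: continuous, once continuously differentiable in time and twice
continuously differentiable in space, with all these derivatives jointly continuous. -/
def IsC12 (d : ℕ) (φ : ℝ → EV d → ℝ) : Prop :=
  Continuous (fun p : ℝ × EV d => φ p.1 p.2) ∧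
  (∀ x, Differentiable ℝ (fun t => φ t x)) ∧
  (∀ t, ContDiff ℝ 2 (fun x => φ t x)) ∧
  Continuous (fun p : ℝ × EV d => timeDeriv d φ p.1 p.2) ∧
  (∀ i, Continuous (fun p : ℝ × EV d => spaceDeriv d φ p.1 p.2 i)) ∧
  (∀ i j, Continuous (fun p : ℝ × EV d => spaceDeriv2 d φ p.1 p.2 i j))

/-- The second order operator
`𝓛φ = (1/2) Σ_{i,j} (σσ^T)_{ij} ∂²φ/∂x_i∂x_j + Σ_i b_i ∂φ/∂x_i`. -/
noncomputable def Lop (d : ℕ) (b : ℝ → EV d → EV d) (σ : ℝ → EV d → Matrix (Fin d) (Fin d) ℝ)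
    (φ : ℝ → EV d → ℝ) (t : ℝ) (x : EV d) : ℝ :=
  (1/2) * ∑ i, ∑ j, (∑ k, σ t x i k * σ t x j k) * spaceDeriv2 d φ t x i j
  + ∑ i, (b t x) i * spaceDeriv d φ t x i

/-- The vector `σ(t,x)^T ∇_x φ(t,x) ∈ ℝ^d`. -/
noncomputable def sigGrad (d : ℕ) (σ : ℝ → EV d → Matrix (Fin d) (Fin d) ℝ)
    (φ : ℝ → EV d → ℝ) (t : ℝ) (x : EV d) : EV d :=
  (EuclideanSpace.equiv (Fin d) ℝ).symm (fun i => ∑ j, σ t x j i * spaceDeriv d φ t x j)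

/-- `ψ(x) = (ln((|x|² + 1)^{1/2}) + 1)²`. -/
noncomputable def psiFun (d : ℕ) (x : EV d) : ℝ :=
  (Real.log ((‖x‖ ^ 2 + 1) ^ ((1 : ℝ) / 2)) + 1) ^ 2

/-- `χ(t,x) = exp((C(T - t) + A) ψ(x))`. -/
noncomputable def chiFun (d : ℕ) (T C A : ℝ) : ℝ → EV d → ℝ :=
  fun t x => Real.exp ((C * (T - t) + A) * psiFun d x)

/- ===== auxiliary machinery for the proof ===== -/

noncomputable def gG (d : ℕ) (x : EV d) : ℝ := ‖x‖^2 + 1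
noncomputable def uU (d : ℕ) (x : EV d) : ℝ := (1/2) * Real.log (gG d x) + 1

lemma gG_pos {d : ℕ} (x : EV d) : 0 < gG d x := by unfold gG; positivity
lemma one_le_gG {d : ℕ} (x : EV d) : 1 ≤ gG d x := by
  unfold gG; nlinarith [sq_nonneg ‖x‖]
lemma one_le_uU {d : ℕ} (x : EV d) : 1 ≤ uU d x := by
  unfold uU; nlinarith [Real.log_nonneg (one_le_gG x)]
lemma psi_eq {d : ℕ} (x : EV d) : psiFun d x = (uU d x)^2 := by
  unfold psiFun uU gG
  rw [Real.log_rpow (by positivity)]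

lemma hasF_g {d : ℕ} (x : EV d) :
    HasFDerivAt (gG d) ((2:ℝ) • (innerSL ℝ x)) x := by
  unfold gG
  have h := (hasStrictFDerivAt_norm_sq x).hasFDerivAt.add_const 1
  refine h.congr_fderiv ?_
  ext v
  simp [two_smul]

lemma hasF_u {d : ℕ} (x : EV d) :
    HasFDerivAt (uU d) ((gG d x)⁻¹ • (innerSL ℝ x)) x := by
  unfold uU
  have h := (((hasF_g x).log (gG_pos x).ne').const_mul (1/2:ℝ)).add_const 1
  refine h.congr_fderiv ?_
  ext v
  have hg := (gG_pos x).ne'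
  simp [ContinuousLinearMap.smul_apply]
  ring

noncomputable def cC (d : ℕ) (T C A t : ℝ) (x : EV d) : ℝ :=
  2 * (C * (T - t) + A) * chiFun d T C A t x * uU d x / gG d x

lemma hasF_chi {d : ℕ} (T C A t : ℝ) (x : EV d) :
    HasFDerivAt (fun y => chiFun d T C A t y) ((cC d T C A t x) • (innerSL ℝ x)) x := by
  have hrw : (fun y => chiFun d T C A t y)
      = fun y => Real.exp ((C * (T - t) + A) * (uU d y * uU d y)) := by
    funext y; rw [chiFun, psi_eq]; ring_nf
  rw [hrw]
  have hpsi : HasFDerivAt (fun y => uU d y * uU d y)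
      ((2 * uU d x) • ((gG d x)⁻¹ • (innerSL ℝ x))) x := by
    have h := (hasF_u x).mul (hasF_u x)
    refine h.congr_fderiv ?_
    ext v
    simp [ContinuousLinearMap.smul_apply]
    ring
  have h := ((hpsi.const_mul (C * (T - t) + A)).exp)
  refine h.congr_fderiv ?_
  ext v
  have hg := (gG_pos x).ne'
  simp [cC, chiFun, psi_eq, ContinuousLinearMap.smul_apply]
  field_simp

lemma spaceDeriv_chi {d : ℕ} (T C A t : ℝ) (x : EV d) (j : Fin d) :
    spaceDeriv d (chiFun d T C A) t x j = cC d T C A t x * x j := by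
  unfold spaceDeriv
  rw [(hasF_chi T C A t x).fderiv]
  simp [ContinuousLinearMap.smul_apply, EuclideanSpace.inner_single_right, real_inner_comm]

noncomputable def alA (d : ℕ) (T C A t : ℝ) (x : EV d) : ℝ :=
  2 * (C * (T - t) + A) * chiFun d T C A t x / (gG d x)^2
    * (2 * (C * (T - t) + A) * (uU d x)^2 + 1 - 2 * uU d x)

lemma hasF_c {d : ℕ} (T C A t : ℝ) (x : EV d) :
    HasFDerivAt (fun y => cC d T C A t y) ((alA d T C A t x) • (innerSL ℝ x)) x := by
  have hnum : HasFDerivAt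
      (fun y => 2 * (C * (T - t) + A) * chiFun d T C A t y * uU d y)
      (((2 * (C * (T - t) + A) * chiFun d T C A t x) • ((gG d x)⁻¹ • (innerSL ℝ x)))
        + (uU d x) • ((2 * (C * (T - t) + A)) • ((cC d T C A t x) • (innerSL ℝ x)))) x := by
    have h := ((hasF_chi T C A t x).const_mul (2 * (C * (T - t) + A))).mul (hasF_u x)
    exact h
  have hginv : HasFDerivAt (fun y => (gG d y)⁻¹)
      ((-((gG d x) ^ 2)⁻¹) • ((2:ℝ) • (innerSL ℝ x))) x :=
    (hasDerivAt_inv (gG_pos x).ne').comp_hasFDerivAt x (hasF_g x)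
  have h := hnum.mul hginv
  have hrw : (fun y => cC d T C A t y)
      = fun y => (2 * (C * (T - t) + A) * chiFun d T C A t y * uU d y) * (gG d y)⁻¹ := by
    funext y; rw [cC, div_eq_mul_inv]
  rw [hrw]
  refine h.congr_fderiv ?_
  ext v
  have hg := (gG_pos x).ne'
  simp [alA, cC, chiFun, psi_eq, ContinuousLinearMap.smul_apply]
  field_simp
  ring

lemma spaceDeriv2_chi {d : ℕ} (T C A t : ℝ) (x : EV d) (i j : Fin d) :
    spaceDeriv2 d (chiFun d T C A) t x i j
      = alA d T C A t x * x i * x j + cC d T C A t x * (if i = j then 1 else 0) := by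
  unfold spaceDeriv2
  have hrw : (fun y => fderiv ℝ (fun z => chiFun d T C A t z) y (EuclideanSpace.single j 1))
      = fun y => cC d T C A t y * y j := by
    funext y
    rw [(hasF_chi T C A t y).fderiv]
    simp [ContinuousLinearMap.smul_apply, EuclideanSpace.inner_single_right, real_inner_comm]
  rw [hrw]
  have h : HasFDerivAt (fun y : EV d => cC d T C A t y * y j)
      (cC d T C A t x • (EuclideanSpace.proj j : EV d →L[ℝ] ℝ)
        + (x j) • ((alA d T C A t x) • (innerSL ℝ x))) x :=
    (hasF_c T C A t x).mul ((EuclideanSpace.proj j : EV d →L[ℝ] ℝ).hasFDerivAt)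
  rw [h.fderiv]
  simp [ContinuousLinearMap.smul_apply, EuclideanSpace.inner_single_right, real_inner_comm,
    EuclideanSpace.single_apply, eq_comm]
  ring

lemma timeDeriv_chi {d : ℕ} (T C A t : ℝ) (x : EV d) :
    timeDeriv d (chiFun d T C A) t x = -(C * psiFun d x * chiFun d T C A t x) := by
  unfold timeDeriv chiFun
  have h1 : HasDerivAt (fun s => (C * (T - s) + A) * psiFun d x) (-C * psiFun d x) t := by
    have h := (((hasDerivAt_id t).const_sub T).const_mul C).add_const A |>.mul_const (psiFun d x)
    refine h.congr_deriv ?_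
    ring
  have h2 := h1.exp
  rw [h2.deriv]
  ring

lemma sum_abs_le' {n : ℕ} (f : Fin n → ℝ) {Z : ℝ} (h : ∀ i, |f i| ≤ Z) :
    |∑ i, f i| ≤ n * Z := by
  calc |∑ i, f i| ≤ ∑ i, |f i| := Finset.abs_sum_le_sum_abs _ _
    _ ≤ ∑ _i : Fin n, Z := Finset.sum_le_sum fun i _ => h i
    _ = n * Z := by simp [Finset.sum_const, mul_comm]

lemma coord_abs_le {d : ℕ} (x : EV d) (i : Fin d) : |x i| ≤ ‖x‖ := by
  rw [EuclideanSpace.norm_eq]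
  have h1 : |x i| ^ 2 ≤ ∑ j, ‖x j‖ ^ 2 := by
    have := Finset.single_le_sum (f := fun j => ‖x j‖ ^ 2)
      (fun j _ => by positivity) (Finset.mem_univ i)
    simpa [Real.norm_eq_abs, sq_abs] using this
  have h2 := Real.sqrt_le_sqrt h1
  rwa [Real.sqrt_sq_eq_abs, abs_abs] at h2

lemma norm_le_of_coord {d : ℕ} (hd : 0 < d) (v : EV d) {Z : ℝ} (hZ : 0 ≤ Z)
    (h : ∀ i, |v i| ≤ Z) : ‖v‖ ≤ d * Z := by
  rw [EuclideanSpace.norm_eq]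
  have h1 : ∑ i, ‖v i‖ ^ 2 ≤ ((d : ℝ) * Z) ^ 2 := by
    have hd1 : (1:ℝ) ≤ d := by exact_mod_cast hd
    calc ∑ i, ‖v i‖ ^ 2 ≤ ∑ _i : Fin d, Z ^ 2 := by
          refine Finset.sum_le_sum fun i _ => ?_
          rw [Real.norm_eq_abs]
          exact pow_le_pow_left₀ (abs_nonneg _) (h i) 2
      _ = d * Z ^ 2 := by simp [Finset.sum_const, mul_comm]
      _ ≤ ((d:ℝ) * Z) ^ 2 := by nlinarith only [hd1, sq_nonneg Z, mul_le_mul_of_nonneg_right hd1 (mul_nonneg (by positivity : (0:ℝ) ≤ (d:ℝ)) (sq_nonneg Z))]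
  have h2 := Real.sqrt_le_sqrt h1
  rwa [Real.sqrt_sq (by positivity)] at h2

set_option maxHeartbeats 2000000 in
/-- **Lemma 5.2 (existence of a strict smooth supersolution).**
For every `A > 0` there exists `C > 0` such that
`χ(t,x) = exp((C(T-t)+A)ψ(x))` satisfies
`-∂χ/∂t - 𝓛χ - κχ - κ|σ^T∇χ| > 0` on `[t₁,T] × ℝ^d`, where `t₁ = max(T - A/C, 0)`. -/
theorem exists_strict_smooth_supersolution
    (T : ℝ) (hT : 0 < T) (d : ℕ) (hd : 0 < d)
    (b : ℝ → EV d → EV d) (σ : ℝ → EV d → Matrix (Fin d) (Fin d) ℝ)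
    (Kb : ℝ) (hb_lip : ∀ t ∈ Icc 0 T, ∀ t' ∈ Icc 0 T, ∀ x x' : EV d,
      ‖b t x - b t' x'‖ ≤ Kb * (|t - t'| + ‖x - x'‖))
    (Kσ : ℝ) (hσ_lip : ∀ t ∈ Icc 0 T, ∀ t' ∈ Icc 0 T, ∀ x x' : EV d, ∀ i j : Fin d,
      |σ t x i j - σ t' x' i j| ≤ Kσ * (|t - t'| + ‖x - x'‖))
    (κ : ℝ) (hκ : 0 ≤ κ) :
    ∀ A > (0 : ℝ), ∃ C > (0 : ℝ), ∀ t : ℝ, ∀ x : EV d,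
      max (T - A / C) 0 ≤ t → t ≤ T →
      0 < -(timeDeriv d (chiFun d T C A) t x) - Lop d b σ (chiFun d T C A) t x
          - κ * chiFun d T C A t x - κ * ‖sigGrad d σ (chiFun d T C A) t x‖ := by
  intro A hA
  classical
  set K1 := max Kσ 0 with hK1def
  set K2 := max Kb 0 with hK2def
  set Mσ := ∑ i : Fin d, ∑ j : Fin d, |σ T 0 i j| with hMσdef
  set Mb := ‖b T 0‖ with hMbdef
  set P := Mσ + Mb + (K1 + K2) * (T + 1) + 1 with hPdef
  have hMσ0 : 0 ≤ Mσ :=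
    Finset.sum_nonneg fun i _ => Finset.sum_nonneg fun j _ => abs_nonneg _
  have hMb0 : 0 ≤ Mb := norm_nonneg _
  have hK10 : 0 ≤ K1 := le_max_right _ _
  have hK20 : 0 ≤ K2 := le_max_right _ _
  have hP1 : 1 ≤ P := by
    have hp := mul_nonneg (add_nonneg hK10 hK20) (by linarith : (0:ℝ) ≤ T + 1)
    linarith only [hMσ0, hMb0, hp, hPdef]
  have hP0 : 0 ≤ P := by linarith
  have hd1 : (1:ℝ) ≤ (d:ℝ) := by exact_mod_cast hd
  set Q1 := (d:ℝ)^3 * P^2 * (4*A*(4*A+3) + 4*A) with hQ1def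
  set Q2 := 8*(d:ℝ)*P*A with hQ2def
  set Q4 := 8*κ*(d:ℝ)^2*P*A with hQ4def
  have hQ10 : 0 ≤ Q1 := by
    rw [hQ1def]
    apply mul_nonneg (mul_nonneg (by positivity) (by positivity))
    linarith only [sq_nonneg A, hA.le]
  have hQ20 : 0 ≤ Q2 := by
    apply mul_nonneg (mul_nonneg (by positivity) hP0) hA.le
  have hQ40 : 0 ≤ Q4 := by
    apply mul_nonneg (mul_nonneg (mul_nonneg (by linarith) (by positivity)) hP0) hA.le
  set Cc := Q1 + Q2 + κ + Q4 + 1 with hCcdef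
  have hCpos : 0 < Cc := by rw [hCcdef]; linarith
  clear_value K1 K2 Mσ Mb P Q1 Q2 Q4 Cc
  refine ⟨Cc, hCpos, ?_⟩
  intro t x ht1 htT
  have ht0 : 0 ≤ t := le_trans (le_max_right _ _) ht1
  have htT' : T - t ≤ A / Cc := by
    have := le_trans (le_max_left _ _) ht1
    linarith
  have haA : Cc * (T - t) ≤ A := by
    have h := (le_div_iff₀ hCpos).mp htT'
    linarith
  set a := Cc * (T - t) + A with ha_def
  have ha1 : A ≤ a := by
    rw [ha_def]
    linarith only [mul_nonneg hCpos.le (sub_nonneg.mpr htT)]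
  have ha2 : a ≤ 2 * A := by rw [ha_def]; linarith
  have ha0 : 0 < a := lt_of_lt_of_le hA ha1
  set gv := gG d x with hgv
  set uv := uU d x with huv
  set Ev := chiFun d T Cc A t x with hEv
  set cv := cC d T Cc A t x with hcv
  set av := alA d T Cc A t x with hav
  have hg1 : 1 ≤ gv := one_le_gG x
  have hg0 : 0 < gv := gG_pos x
  have hu1 : 1 ≤ uv := one_le_uU x
  have hu0 : 0 < uv := lt_of_lt_of_le one_pos hu1
  have hE0 : 0 < Ev := Real.exp_pos _
  have hx0 : 0 ≤ ‖x‖ := norm_nonneg x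
  clear_value a gv uv Ev cv av
  have hx2 : ‖x‖^2 ≤ gv := by rw [hgv]; unfold gG; linarith
  have hgx : gv = ‖x‖^2 + 1 := by rw [hgv]; rfl
  have hxg : ‖x‖ ≤ gv := by linarith only [sq_nonneg (‖x‖ - 1), hgx, hx0]
  have h1x2 : (1 + ‖x‖)^2 ≤ 2 * gv := by linarith only [sq_nonneg (‖x‖ - 1), hgx]
  have h1xx : (1 + ‖x‖) * ‖x‖ ≤ 2 * gv := by linarith only [sq_nonneg (‖x‖ - 1), hgx, hx0]
  -- identities for c and α
  have hcg : cv * gv = 2 * a * Ev * uv := by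
    rw [hcv]
    unfold cC
    rw [← hgv, ← huv, ← hEv, ← ha_def]
    field_simp
  have hc0 : 0 < cv := by
    have h1 : 0 < 2 * a * Ev * uv := by positivity
    nlinarith only [hcg, hg0, h1]
  have hαid : av * gv^2 = 2*a*Ev*(2*a*uv^2 + 1 - 2*uv) := by
    rw [hav]
    unfold alA
    rw [← hgv, ← huv, ← hEv, ← ha_def]
    field_simp
  have hαg : |av| * gv^2 ≤ 2*a*(2*a+3)*uv^2*Ev := by
    have h2 : |2*a*uv^2 + 1 - 2*uv| ≤ (2*a+3)*uv^2 := by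
      have huu : uv ≤ uv^2 := by nlinarith only [mul_le_mul_of_nonneg_left hu1 hu0.le]
      have hau : 0 ≤ a * uv^2 := by positivity
      rcases abs_cases (2*a*uv^2 + 1 - 2*uv) with ⟨h, _⟩ | ⟨h, _⟩ <;> rw [h] <;>
        nlinarith only [huu, hau, hu1, hu0, ha0, sq_nonneg (uv - 1)]
    calc |av| * gv^2 = |av * gv^2| := by
          rw [abs_mul, abs_of_nonneg (by positivity : (0:ℝ) ≤ gv^2)]
      _ = |2*a*Ev| * |2*a*uv^2 + 1 - 2*uv| := by rw [hαid, abs_mul]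
      _ ≤ (2*a*Ev) * ((2*a+3)*uv^2) := by
          apply mul_le_mul (le_of_eq (abs_of_nonneg (by positivity))) h2 (abs_nonneg _)
            (by positivity)
      _ = 2*a*(2*a+3)*uv^2*Ev := by ring
  -- bounds on σ and b
  have hσB : ∀ i j, |σ t x i j| ≤ P * (1 + ‖x‖) := by
    intro i j
    have hl := hσ_lip t ⟨ht0, htT⟩ T ⟨hT.le, le_refl T⟩ x 0 i j
    have h0 : |σ T 0 i j| ≤ Mσ := by
      rw [hMσdef]
      calc |σ T 0 i j| ≤ ∑ j', |σ T 0 i j'| :=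
            Finset.single_le_sum (f := fun j' => |σ T 0 i j'|)
              (fun _ _ => abs_nonneg _) (Finset.mem_univ j)
        _ ≤ ∑ i', ∑ j', |σ T 0 i' j'| :=
            Finset.single_le_sum (f := fun i' => ∑ j', |σ T 0 i' j'|)
              (fun _ _ => Finset.sum_nonneg fun _ _ => abs_nonneg _) (Finset.mem_univ i)
    have habs : |t - T| ≤ T := by
      rw [abs_sub_comm, abs_of_nonneg (by linarith)]; linarith
    have hxn : ‖x - (0:EV d)‖ = ‖x‖ := by rw [sub_zero]
    have hKb1 : Kσ * (|t - T| + ‖x - (0:EV d)‖) ≤ K1 * (T + ‖x‖) := by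
      have h1 : Kσ * (|t - T| + ‖x - (0:EV d)‖) ≤ K1 * (|t - T| + ‖x - (0:EV d)‖) :=
        mul_le_mul_of_nonneg_right (by rw [hK1def]; exact le_max_left _ _) (by positivity)
      have h2 : K1 * (|t - T| + ‖x - (0:EV d)‖) ≤ K1 * (T + ‖x‖) := by
        rw [hxn]
        exact mul_le_mul_of_nonneg_left (by linarith) hK10
      linarith
    have htri : |σ t x i j| ≤ |σ T 0 i j| + |σ t x i j - σ T 0 i j| := by
      calc |σ t x i j| = |σ T 0 i j + (σ t x i j - σ T 0 i j)| := by ring_nf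
        _ ≤ |σ T 0 i j| + |σ t x i j - σ T 0 i j| := abs_add_le _ _
    have hfin : |σ t x i j| ≤ Mσ + K1 * (T + ‖x‖) := by linarith
    have hPK1 : 0 ≤ P - K1 := by
      rw [hPdef]
      linarith [mul_nonneg hK10 hT.le, mul_nonneg hK20 hT.le]
    have h5 : 0 ≤ (P - K1) * ‖x‖ := mul_nonneg hPK1 hx0
    have hPa : Mσ + K1 * T ≤ P := by
      rw [hPdef]
      linarith [mul_nonneg hK10 hT.le, mul_nonneg hK20 hT.le]
    nlinarith only [hfin, h5, hPa, hx0]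
  have hbB : ∀ i, |b t x i| ≤ P * (1 + ‖x‖) := by
    intro i
    have hl := hb_lip t ⟨ht0, htT⟩ T ⟨hT.le, le_refl T⟩ x 0
    have habs : |t - T| ≤ T := by
      rw [abs_sub_comm, abs_of_nonneg (by linarith)]; linarith
    have hxn : ‖x - (0:EV d)‖ = ‖x‖ := by rw [sub_zero]
    have hKb1 : Kb * (|t - T| + ‖x - (0:EV d)‖) ≤ K2 * (T + ‖x‖) := by
      have h1 : Kb * (|t - T| + ‖x - (0:EV d)‖) ≤ K2 * (|t - T| + ‖x - (0:EV d)‖) :=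
        mul_le_mul_of_nonneg_right (by rw [hK2def]; exact le_max_left _ _) (by positivity)
      have h2 : K2 * (|t - T| + ‖x - (0:EV d)‖) ≤ K2 * (T + ‖x‖) := by
        rw [hxn]
        exact mul_le_mul_of_nonneg_left (by linarith) hK20
      linarith
    have h1 : |b t x i| ≤ ‖b t x‖ := coord_abs_le _ i
    have h2 : ‖b t x‖ - ‖b T 0‖ ≤ ‖b t x - b T 0‖ := norm_sub_norm_le _ _
    have hfin : |b t x i| ≤ Mb + K2 * (T + ‖x‖) := by
      rw [hMbdef]
      linarith
    have hPK1 : 0 ≤ P - K2 := by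
      rw [hPdef]
      linarith [mul_nonneg hK10 hT.le, mul_nonneg hK20 hT.le]
    have h5 : 0 ≤ (P - K2) * ‖x‖ := mul_nonneg hPK1 hx0
    have hPa : Mb + K2 * T ≤ P := by
      rw [hPdef]
      linarith [mul_nonneg hK10 hT.le, mul_nonneg hK20 hT.le]
    nlinarith only [hfin, h5, hPa, hx0]
  -- Hessian entry bound
  have hH : ∀ i j, |spaceDeriv2 d (chiFun d T Cc A) t x i j| ≤ |av| * ‖x‖^2 + cv := by
    intro i j
    rw [spaceDeriv2_chi, ← hav, ← hcv]
    have h1 : |av * x i * x j| ≤ |av| * ‖x‖^2 := by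
      rw [abs_mul, abs_mul]
      calc |av| * |x i| * |x j| ≤ |av| * ‖x‖ * ‖x‖ := by
            apply mul_le_mul (mul_le_mul_of_nonneg_left (coord_abs_le x i) (abs_nonneg _))
              (coord_abs_le x j) (abs_nonneg _) (by positivity)
        _ = |av| * ‖x‖^2 := by ring
    have h2 : |cv * (if i = j then 1 else 0)| ≤ cv := by
      split <;> simp [abs_of_nonneg hc0.le, hc0.le]
    calc |av * x i * x j + cv * (if i = j then 1 else 0)|
        ≤ |av * x i * x j| + |cv * (if i = j then 1 else 0)| := abs_add_le _ _
      _ ≤ |av| * ‖x‖^2 + cv := by linarith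
  have hsB : ∀ i j, |∑ k, σ t x i k * σ t x j k| ≤ d * (P * (1 + ‖x‖))^2 := by
    intro i j
    apply sum_abs_le'
    intro k
    rw [abs_mul, sq]
    exact mul_le_mul (hσB i k) (hσB j k) (abs_nonneg _) (by positivity)
  have hSbound : |∑ i, ∑ j, (∑ k, σ t x i k * σ t x j k) *
      spaceDeriv2 d (chiFun d T Cc A) t x i j|
      ≤ d * (d * ((d * (P * (1+‖x‖))^2) * (|av| * ‖x‖^2 + cv))) := by
    apply sum_abs_le'
    intro i
    apply sum_abs_le'
    intro j
    rw [abs_mul]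
    apply mul_le_mul (hsB i j) (hH i j) (abs_nonneg _) (by positivity)
  -- convert to ψ E bounds
  have key1 : |av| * ‖x‖^2 * (1+‖x‖)^2 ≤ 8*A*(4*A+3) * (uv^2 * Ev) := by
    have hcoef : 4*a*(2*a+3) ≤ 8*A*(4*A+3) := by
      nlinarith only [ha2, ha0, hA, mul_le_mul ha2 ha2 ha0.le (by linarith : (0:ℝ) ≤ 2*A)]
    have hW : (0:ℝ) ≤ uv^2 * Ev := by positivity
    calc |av| * ‖x‖^2 * (1+‖x‖)^2 ≤ (|av| * gv) * (2*gv) := by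
          apply mul_le_mul (mul_le_mul_of_nonneg_left hx2 (abs_nonneg _)) h1x2
            (by positivity) (by positivity)
      _ = 2*(|av| * gv^2) := by ring
      _ ≤ 2*(2*a*(2*a+3)*uv^2*Ev) := by linarith
      _ = (4*a*(2*a+3)) * (uv^2*Ev) := by ring
      _ ≤ 8*A*(4*A+3) * (uv^2*Ev) := mul_le_mul_of_nonneg_right hcoef hW
  have key2 : cv * (1+‖x‖)^2 ≤ 8*A*(uv^2*Ev) := by
    calc cv * (1+‖x‖)^2 ≤ cv * (2*gv) := mul_le_mul_of_nonneg_left h1x2 hc0.le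
      _ = 2*(cv*gv) := by ring
      _ = 2*(2*a*Ev*uv) := by rw [hcg]
      _ ≤ 8*A*(uv^2*Ev) := by
          have h1 : 4*a*(Ev*uv) ≤ 8*A*(Ev*uv) :=
            mul_le_mul_of_nonneg_right (by linarith) (by positivity)
          have h2 : 8*A*(Ev*uv) ≤ 8*A*(Ev*(uv*uv)) := by
            apply mul_le_mul_of_nonneg_left _ (by positivity)
            have := mul_le_mul_of_nonneg_left hu1 (mul_pos hE0 hu0).le
            linarith only [this]
          linarith only [h1, h2]
  have hS2 : |∑ i, ∑ j, (∑ k, σ t x i k * σ t x j k) *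
      spaceDeriv2 d (chiFun d T Cc A) t x i j| ≤ 2*Q1*(uv^2*Ev) := by
    calc |∑ i, ∑ j, (∑ k, σ t x i k * σ t x j k) *
        spaceDeriv2 d (chiFun d T Cc A) t x i j|
        ≤ d * (d * ((d * (P * (1+‖x‖))^2) * (|av| * ‖x‖^2 + cv))) := hSbound
      _ = (d:ℝ)^3*P^2 * (|av| * ‖x‖^2 * (1+‖x‖)^2 + cv * (1+‖x‖)^2) := by ring
      _ ≤ (d:ℝ)^3*P^2 * (8*A*(4*A+3)*(uv^2*Ev) + 8*A*(uv^2*Ev)) := by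
          apply mul_le_mul_of_nonneg_left (by linarith) (by positivity)
      _ = 2*Q1*(uv^2*Ev) := by rw [hQ1def]; ring
  -- first order term
  have hfo : 2*a*Ev*uv ≤ 4*A*(uv^2*Ev) := by
    have h1 : 2*a*(Ev*uv) ≤ 4*A*(Ev*uv) :=
      mul_le_mul_of_nonneg_right (by linarith) (by positivity)
    have h2 : 4*A*(Ev*uv) ≤ 4*A*(Ev*(uv*uv)) := by
      apply mul_le_mul_of_nonneg_left _ (by positivity)
      linarith only [mul_le_mul_of_nonneg_left hu1 (mul_pos hE0 hu0).le]
    linarith only [h1, h2]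
  have hbterm : |∑ i, b t x i * spaceDeriv d (chiFun d T Cc A) t x i| ≤ Q2*(uv^2*Ev) := by
    have hpt : ∀ i, |b t x i * spaceDeriv d (chiFun d T Cc A) t x i|
        ≤ (P*(1+‖x‖)) * (cv*‖x‖) := by
      intro i
      rw [spaceDeriv_chi, ← hcv, abs_mul, abs_mul]
      apply mul_le_mul (hbB i)
      · exact mul_le_mul (le_of_eq (abs_of_nonneg hc0.le)) (coord_abs_le x i)
          (abs_nonneg _) hc0.le
      · positivity
      · positivity
    calc |∑ i, b t x i * spaceDeriv d (chiFun d T Cc A) t x i|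
        ≤ d * ((P*(1+‖x‖)) * (cv*‖x‖)) := sum_abs_le' _ hpt
      _ = (d:ℝ)*P*(cv*((1+‖x‖)*‖x‖)) := by ring
      _ ≤ (d:ℝ)*P*(cv*(2*gv)) := by
          apply mul_le_mul_of_nonneg_left _ (by positivity)
          exact mul_le_mul_of_nonneg_left h1xx hc0.le
      _ = (d:ℝ)*P*(2*(cv*gv)) := by ring
      _ = (d:ℝ)*P*(2*(2*a*Ev*uv)) := by rw [hcg]
      _ ≤ (d:ℝ)*P*(2*(4*A*(uv^2*Ev))) := by
          apply mul_le_mul_of_nonneg_left _ (by positivity)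
          linarith
      _ = Q2*(uv^2*Ev) := by rw [hQ2def]; ring
  -- kappa chi term
  have hκchi : κ * Ev ≤ κ * (uv^2*Ev) := by
    apply mul_le_mul_of_nonneg_left _ hκ
    linarith only [mul_le_mul_of_nonneg_right (show (1:ℝ) ≤ uv^2 by nlinarith only [hu1, hu0, mul_le_mul_of_nonneg_left hu1 hu0.le]) hE0.le]
  -- sigGrad term
  have hsgQ : κ * ‖sigGrad d σ (chiFun d T Cc A) t x‖ ≤ Q4*(uv^2*Ev) := by
    have hZ0 : (0:ℝ) ≤ (d:ℝ) * ((P*(1+‖x‖)) * (cv*‖x‖)) := by positivity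
    have hco : ∀ i, |sigGrad d σ (chiFun d T Cc A) t x i|
        ≤ (d:ℝ) * ((P*(1+‖x‖)) * (cv*‖x‖)) := by
      intro i
      have hco2 : sigGrad d σ (chiFun d T Cc A) t x i
          = ∑ j, σ t x j i * spaceDeriv d (chiFun d T Cc A) t x j := rfl
      rw [hco2]
      apply sum_abs_le'
      intro j
      rw [spaceDeriv_chi, ← hcv, abs_mul, abs_mul]
      apply mul_le_mul (hσB j i)
      · exact mul_le_mul (le_of_eq (abs_of_nonneg hc0.le)) (coord_abs_le x j)
          (abs_nonneg _) hc0.le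
      · positivity
      · positivity
    have hn := norm_le_of_coord hd _ hZ0 hco
    calc κ * ‖sigGrad d σ (chiFun d T Cc A) t x‖
        ≤ κ * ((d:ℝ) * ((d:ℝ) * ((P*(1+‖x‖)) * (cv*‖x‖)))) := by
          exact mul_le_mul_of_nonneg_left hn hκ
      _ = κ * (d:ℝ)^2 * P * (cv*((1+‖x‖)*‖x‖)) := by ring
      _ ≤ κ * (d:ℝ)^2 * P * (cv*(2*gv)) := by
          apply mul_le_mul_of_nonneg_left _ (by positivity)
          exact mul_le_mul_of_nonneg_left h1xx hc0.le
      _ = κ * (d:ℝ)^2 * P * (2*(2*a*Ev*uv)) := by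
          rw [show cv*(2*gv) = 2*(cv*gv) from by ring, hcg]
      _ ≤ κ * (d:ℝ)^2 * P * (2*(4*A*(uv^2*Ev))) := by
          apply mul_le_mul_of_nonneg_left _ (by positivity)
          linarith
      _ = Q4*(uv^2*Ev) := by rw [hQ4def]; ring
  -- time derivative
  have hTD : timeDeriv d (chiFun d T Cc A) t x = -(Cc * (uv^2) * Ev) := by
    rw [timeDeriv_chi, psi_eq, ← hEv, ← huv]
  have hW0 : (0:ℝ) < uv^2*Ev := by positivity
  have hCexp : Cc * (uv^2) * Ev
      = Q1*(uv^2*Ev) + Q2*(uv^2*Ev) + κ*(uv^2*Ev) + Q4*(uv^2*Ev) + uv^2*Ev := by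
    rw [hCcdef]; ring
  have hLop : Lop d b σ (chiFun d T Cc A) t x
      = (1/2) * ∑ i, ∑ j, (∑ k, σ t x i k * σ t x j k) *
          spaceDeriv2 d (chiFun d T Cc A) t x i j
        + ∑ i, b t x i * spaceDeriv d (chiFun d T Cc A) t x i := rfl
  rw [hTD, hLop]
  have hS2' := (abs_le.mp hS2).2
  have hb' := (abs_le.mp hbterm).2
  linarith only [hS2', hb', hκchi, hsgQ, hCexp, hW0]
end
end

section
/- Comparison with a strict supersolution (key step in the proof of Theorem 5.5): let κ ≥ 0 and 0 ≤ t₁ < T. Let χ : [t₁,T] × ℝ^d → (0,∞) be a C^{1,2} function satisfying −∂χ/∂t(t,x) − 𝓛χ(t,x) − κ·χ(t,x) − κ·|σ(t,x)^T ∇_x χ(t,x)| > 0 for all (t,x) ∈ [t₁,T] × ℝ^d. Let w : [t₁,T] × ℝ^d → ℝ be continuous, a viscosity subsolution on (t₁,T) × ℝ^d of min(w, −∂w/∂t − 𝓛w − κ|w| − κ|σ^T∇w|) = 0, with w(T,·) ≤ 0, and suppose that sup_{t ∈ [t₁,T]} |w(t,x)| / χ(t,x) → 0 as |x| → ∞.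 Then w(t,x) ≤ 0 for all (t,x) ∈ [t₁,T] × ℝ^d. -/
open Set Filter

noncomputable section

section Helpers

variable {d : ℕ}

lemma spaceDeriv_smul (χ : ℝ → EV d → ℝ) (hχ : ∀ t, ContDiff ℝ 2 (fun x => χ t x))
    (Λ : ℝ → ℝ) (t : ℝ) (x : EV d) (i : Fin d) :
    spaceDeriv d (fun s y => Λ s * χ s y) t x i = Λ t * spaceDeriv d χ t x i := by
  have hdiff : DifferentiableAt ℝ (fun y => χ t y) x :=
    ((hχ t).differentiable two_ne_zero).differentiableAt
  simp only [spaceDeriv]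
  rw [fderiv_const_mul hdiff]
  simp

lemma spaceDeriv2_smul (χ : ℝ → EV d → ℝ) (hχ : ∀ t, ContDiff ℝ 2 (fun x => χ t x))
    (Λ : ℝ → ℝ) (t : ℝ) (x : EV d) (i j : Fin d) :
    spaceDeriv2 d (fun s y => Λ s * χ s y) t x i j = Λ t * spaceDeriv2 d χ t x i j := by
  have hdiff : Differentiable ℝ (fun y => χ t y) := (hχ t).differentiable two_ne_zero
  have h1 : (fun y => fderiv ℝ (fun z => Λ t * χ t z) y (EuclideanSpace.single j 1))
      = fun y => Λ t * fderiv ℝ (fun z => χ t z) y (EuclideanSpace.single j 1) := by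
    funext y
    rw [fderiv_const_mul (hdiff y)]
    simp
  have hg : ContDiff ℝ 1 (fun y => fderiv ℝ (fun z => χ t z) y (EuclideanSpace.single j 1)) :=
    ((hχ t).fderiv_right (by norm_num)).clm_apply contDiff_const
  simp only [spaceDeriv2, h1]
  rw [fderiv_const_mul ((hg.differentiable one_ne_zero).differentiableAt)]
  simp

lemma timeDeriv_smul (χ : ℝ → EV d → ℝ) (hχt : ∀ x, Differentiable ℝ (fun t => χ t x))
    (Λ : ℝ → ℝ) (hΛ : Differentiable ℝ Λ) (t : ℝ) (x : EV d) :
    timeDeriv d (fun s y => Λ s * χ s y) t x = deriv Λ t * χ t x + Λ t * timeDeriv d χ t x := by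
  simp only [timeDeriv]
  exact deriv_mul (hΛ t) ((hχt x) t)

lemma Lop_smul (b : ℝ → EV d → EV d) (σ : ℝ → EV d → Matrix (Fin d) (Fin d) ℝ)
    (χ : ℝ → EV d → ℝ) (hχ : ∀ t, ContDiff ℝ 2 (fun x => χ t x))
    (Λ : ℝ → ℝ) (t : ℝ) (x : EV d) :
    Lop d b σ (fun s y => Λ s * χ s y) t x = Λ t * Lop d b σ χ t x := by
  simp only [Lop, spaceDeriv_smul χ hχ Λ, spaceDeriv2_smul χ hχ Λ]
  have h1 : ∑ i, ∑ j, (∑ k, σ t x i k * σ t x j k) * (Λ t * spaceDeriv2 d χ t x i j)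
      = Λ t * ∑ i, ∑ j, (∑ k, σ t x i k * σ t x j k) * spaceDeriv2 d χ t x i j := by
    rw [Finset.mul_sum]
    refine Finset.sum_congr rfl fun i _ => ?_
    rw [Finset.mul_sum]
    exact Finset.sum_congr rfl fun j _ => by ring
  have h2 : ∑ i, (b t x) i * (Λ t * spaceDeriv d χ t x i)
      = Λ t * ∑ i, (b t x) i * spaceDeriv d χ t x i := by
    rw [Finset.mul_sum]
    exact Finset.sum_congr rfl fun i _ => by ring
  rw [h1, h2]
  ring

lemma sigGrad_smul (σ : ℝ → EV d → Matrix (Fin d) (Fin d) ℝ)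
    (χ : ℝ → EV d → ℝ) (hχ : ∀ t, ContDiff ℝ 2 (fun x => χ t x))
    (Λ : ℝ → ℝ) (t : ℝ) (x : EV d) :
    sigGrad d σ (fun s y => Λ s * χ s y) t x = Λ t • sigGrad d σ χ t x := by
  simp only [sigGrad, spaceDeriv_smul χ hχ Λ]
  rw [← map_smul]
  congr 1
  funext i
  simp only [Pi.smul_apply, smul_eq_mul]
  rw [Finset.mul_sum]
  exact Finset.sum_congr rfl fun j _ => by ring

lemma isC12_smul (χ : ℝ → EV d → ℝ) (hχ : IsC12 d χ) (Λ : ℝ → ℝ)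
    (hΛ : Differentiable ℝ Λ) (hΛ' : Continuous (deriv Λ)) :
    IsC12 d (fun s y => Λ s * χ s y) := by
  obtain ⟨h0, h1, h2, h3, h4, h5⟩ := hχ
  refine ⟨(hΛ.continuous.comp continuous_fst).mul h0, fun x => hΛ.mul (h1 x),
    fun t => contDiff_const.mul (h2 t), ?_, ?_, ?_⟩
  · have he : (fun p : ℝ × EV d => timeDeriv d (fun s y => Λ s * χ s y) p.1 p.2)
        = fun p : ℝ × EV d => deriv Λ p.1 * χ p.1 p.2 + Λ p.1 * timeDeriv d χ p.1 p.2 := by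
      funext p; exact timeDeriv_smul χ h1 Λ hΛ p.1 p.2
    rw [he]
    exact ((hΛ'.comp continuous_fst).mul h0).add ((hΛ.continuous.comp continuous_fst).mul h3)
  · intro i
    have he : (fun p : ℝ × EV d => spaceDeriv d (fun s y => Λ s * χ s y) p.1 p.2 i)
        = fun p : ℝ × EV d => Λ p.1 * spaceDeriv d χ p.1 p.2 i := by
      funext p; exact spaceDeriv_smul χ h2 Λ p.1 p.2 i
    rw [he]
    exact (hΛ.continuous.comp continuous_fst).mul (h4 i)
  · intro i j
    have he : (fun p : ℝ × EV d => spaceDeriv2 d (fun s y => Λ s * χ s y) p.1 p.2 i j)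
        = fun p : ℝ × EV d => Λ p.1 * spaceDeriv2 d χ p.1 p.2 i j := by
      funext p; exact spaceDeriv2_smul χ h2 Λ p.1 p.2 i j
    rw [he]
    exact (hΛ.continuous.comp continuous_fst).mul (h5 i j)

lemma div_le_div_of_nonneg_right' {a b c : ℝ} (h : a ≤ b) (hc : 0 < c) :
    a / c ≤ b / c := (div_le_div_iff_of_pos_right hc).2 h

end Helpers

open Topology

set_option maxHeartbeats 1000000 in
/-- **Comparison with a strict supersolution** (key step in the proof of Theorem 5.5).
If `χ > 0` is a `C^{1,2}` strict supersolution of the linear equation on `[t₁,T] × ℝ^d`,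
`w` is a continuous viscosity subsolution of `min(w, -∂w/∂t - 𝓛w - κ|w| - κ|σ^T∇w|) = 0`
on `(t₁,T) × ℝ^d` with `w(T,·) ≤ 0` and `sup_{t ∈ [t₁,T]} |w(t,x)|/χ(t,x) → 0` as `|x| → ∞`,
then `w ≤ 0` on `[t₁,T] × ℝ^d`. -/
theorem comparison_with_strict_supersolution
    (T : ℝ) (hT : 0 < T) (d : ℕ) (hd : 0 < d)
    (b : ℝ → EV d → EV d) (σ : ℝ → EV d → Matrix (Fin d) (Fin d) ℝ)
    (Kb : ℝ) (hb_lip : ∀ t ∈ Icc 0 T, ∀ t' ∈ Icc 0 T, ∀ x x' : EV d,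
      ‖b t x - b t' x'‖ ≤ Kb * (|t - t'| + ‖x - x'‖))
    (Kσ : ℝ) (hσ_lip : ∀ t ∈ Icc 0 T, ∀ t' ∈ Icc 0 T, ∀ x x' : EV d, ∀ i j : Fin d,
      |σ t x i j - σ t' x' i j| ≤ Kσ * (|t - t'| + ‖x - x'‖))
    (κ : ℝ) (hκ : 0 ≤ κ)
    (t₁ : ℝ) (ht₁ : 0 ≤ t₁) (ht₁T : t₁ < T)
    (χ : ℝ → EV d → ℝ) (hχ_C12 : IsC12 d χ)
    (hχ_pos : ∀ t ∈ Icc t₁ T, ∀ x : EV d, 0 < χ t x)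
    (hχ_supersol : ∀ t ∈ Icc t₁ T, ∀ x : EV d,
      0 < -(timeDeriv d χ t x) - Lop d b σ χ t x - κ * χ t x - κ * ‖sigGrad d σ χ t x‖)
    (w : ℝ → EV d → ℝ)
    (hw_cont : ContinuousOn (fun p : ℝ × EV d => w p.1 p.2) (Icc t₁ T ×ˢ univ))
    (hw_subsol : ∀ φ : ℝ → EV d → ℝ, IsC12 d φ →
      ∀ t : ℝ, ∀ x : EV d, t ∈ Ioo t₁ T →
        IsLocalMaxOn (fun p : ℝ × EV d => w p.1 p.2 - φ p.1 p.2) (Ioo t₁ T ×ˢ univ) (t, x) →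
        min (w t x)
          (-(timeDeriv d φ t x) - Lop d b σ φ t x - κ * |w t x|
            - κ * ‖sigGrad d σ φ t x‖) ≤ 0)
    (hw_T : ∀ x : EV d, w T x ≤ 0)
    (hw_decay : ∀ ε > (0 : ℝ), ∃ M : ℝ, ∀ x : EV d, M ≤ ‖x‖ →
      ∀ t ∈ Icc t₁ T, |w t x| / χ t x < ε) :
    ∀ t ∈ Icc t₁ T, ∀ x : EV d, w t x ≤ 0 := by
  classical
  -- Setup
  set S : Set (ℝ × EV d) := Icc t₁ T ×ˢ (univ : Set (EV d)) with hSdef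
  by_contra hcon
  push_neg at hcon
  obtain ⟨t₀, ht₀, x₀, hx₀⟩ := hcon
  -- Step 1: find an interior-time point where w is positive
  have hkey : ∃ ts xs, ts ∈ Ioo t₁ T ∧ 0 < w ts xs := by
    have ht₀T : t₀ < T := by
      rcases lt_or_eq_of_le ht₀.2 with h | h
      · exact h
      · exact absurd hx₀ (not_lt.2 (h ▸ hw_T x₀))
    rcases lt_or_eq_of_le ht₀.1 with h | h
    · exact ⟨t₀, x₀, ⟨h, ht₀T⟩, hx₀⟩
    · -- t₀ = t₁ : use continuity
      have hx₁ : 0 < w t₁ x₀ := by rw [h]; exact hx₀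
      have hwx : ContinuousOn (fun t => w t x₀) (Icc t₁ T) := by
        have : (fun t => w t x₀) = (fun p : ℝ × EV d => w p.1 p.2) ∘ (fun t => (t, x₀)) := rfl
        rw [this]
        exact hw_cont.comp ((continuous_id.prodMk continuous_const).continuousOn)
          (fun t ht => ⟨ht, mem_univ _⟩)
      have hc : ContinuousWithinAt (fun t => w t x₀) (Icc t₁ T) t₁ :=
        hwx t₁ ⟨le_refl _, le_of_lt ht₁T⟩
      have hev : ∀ᶠ t in 𝓝[Icc t₁ T] t₁, 0 < w t x₀ := hc.eventually (eventually_gt_nhds hx₁)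
      have hmem : Icc t₁ T ∈ 𝓝[>] t₁ :=
        mem_nhdsWithin.2 ⟨Iio T, isOpen_Iio, ht₁T,
          fun z hz => ⟨le_of_lt hz.2, le_of_lt hz.1⟩⟩
      have hev2 : ∀ᶠ t in 𝓝[>] t₁, 0 < w t x₀ := hev.filter_mono (nhdsWithin_le_of_mem hmem)
      have hev3 : ∀ᶠ t in 𝓝[>] t₁, t < T :=
        ((eventually_lt_nhds ht₁T).filter_mono nhdsWithin_le_nhds)
      have hev4 : ∀ᶠ t in 𝓝[>] t₁, t₁ < t := eventually_mem_nhdsWithin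
      obtain ⟨t', ht'⟩ := (hev2.and (hev3.and hev4)).exists
      exact ⟨t', x₀, ⟨ht'.2.2, ht'.2.1⟩, ht'.1⟩
  obtain ⟨ts, xs, htsIoo, hwts⟩ := hkey
  have htsIcc : ts ∈ Icc t₁ T := Ioo_subset_Icc_self htsIoo
  have hχts : 0 < χ ts xs := hχ_pos ts htsIcc xs
  have hχcont : Continuous (fun p : ℝ × EV d => χ p.1 p.2) := hχ_C12.1
  set c : ℝ := w ts xs / χ ts xs with hcdef
  have hcpos : 0 < c := div_pos hwts hχts
  -- Step 2: a global upper bound B for w/χ on the strip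
  obtain ⟨B, hBpos, hB⟩ : ∃ B : ℝ, 0 < B ∧ ∀ t ∈ Icc t₁ T, ∀ x : EV d, w t x / χ t x ≤ B := by
    obtain ⟨M, hM⟩ := hw_decay 1 one_pos
    set K : Set (ℝ × EV d) := Icc t₁ T ×ˢ Metric.closedBall 0 (|M| + 1) with hKdef
    have hKS : K ⊆ S := prod_mono (subset_refl _) (subset_univ _)
    have hKc : IsCompact K := isCompact_Icc.prod (isCompact_closedBall _ _)
    have hKne : K.Nonempty := ⟨(t₁, 0), ⟨le_refl _, le_of_lt ht₁T⟩,
      mem_closedBall_zero_iff.2 (by simp; positivity)⟩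
    have hvcont : ContinuousOn (fun p : ℝ × EV d => w p.1 p.2 / χ p.1 p.2) K :=
      (hw_cont.mono hKS).div hχcont.continuousOn
        (fun p hp => ne_of_gt (hχ_pos p.1 hp.1 p.2))
    obtain ⟨p₀, hp₀K, hp₀'⟩ := hKc.exists_isMaxOn hKne hvcont
    have hp₀ := isMaxOn_iff.1 hp₀'
    refine ⟨max (w p₀.1 p₀.2 / χ p₀.1 p₀.2) 1, lt_of_lt_of_le one_pos (le_max_right _ _),
      fun t ht x => ?_⟩
    by_cases hx : ‖x‖ ≤ |M| + 1
    · exact le_trans (hp₀ (t, x) ⟨ht, mem_closedBall_zero_iff.2 hx⟩) (le_max_left _ _)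
    · have hxM : M ≤ ‖x‖ := le_trans (le_trans (le_abs_self M) (by linarith)) (le_of_lt (not_le.1 hx))
      have h1 : w t x / χ t x ≤ |w t x| / χ t x :=
        div_le_div_of_nonneg_right' (le_abs_self _) (hχ_pos t ht x)
      exact le_trans (le_of_lt (lt_of_le_of_lt h1 (hM x hxM t ht))) (le_max_right _ _)
  -- The penalized ratio function
  set G : ℝ → ℝ × EV d → ℝ :=
    fun ρ p => w p.1 p.2 / χ p.1 p.2 * Real.exp (ρ * (p.1 - t₁)) with hGdef
  -- Step 3: for each ρ > 0, G ρ attains a global max on S at some (s,y), s ≠ T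
  have hGmax : ∀ ρ : ℝ, 0 < ρ → ∃ s y, s ∈ Icc t₁ T ∧ s ≠ T ∧
      ∀ p ∈ S, G ρ p ≤ G ρ (s, y) := by
    intro ρ hρ
    have hγpos : 0 < G ρ (ts, xs) := by
      simp only [hGdef]
      exact mul_pos hcpos (Real.exp_pos _)
    have hout : ∃ M : ℝ, ∀ x : EV d, M ≤ ‖x‖ → ∀ t ∈ Icc t₁ T,
        G ρ (t, x) < G ρ (ts, xs) := by
      obtain ⟨M, hM⟩ := hw_decay (G ρ (ts, xs) / Real.exp (ρ * (T - t₁)))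
        (div_pos hγpos (Real.exp_pos _))
      refine ⟨M, fun x hx t ht => ?_⟩
      have hχtx := hχ_pos t ht x
      have h1 : w t x / χ t x ≤ |w t x| / χ t x :=
        div_le_div_of_nonneg_right' (le_abs_self _) hχtx
      have h2 : Real.exp (ρ * (t - t₁)) ≤ Real.exp (ρ * (T - t₁)) := by
        apply Real.exp_le_exp.2
        have := ht.2
        nlinarith
      have h3 : G ρ (t, x) ≤ |w t x| / χ t x * Real.exp (ρ * (T - t₁)) := by
        simp only [hGdef]
        exact mul_le_mul h1 h2 (le_of_lt (Real.exp_pos _))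
          (div_nonneg (abs_nonneg _) (le_of_lt hχtx))
      have h4 : |w t x| / χ t x * Real.exp (ρ * (T - t₁))
          < G ρ (ts, xs) / Real.exp (ρ * (T - t₁)) * Real.exp (ρ * (T - t₁)) :=
        mul_lt_mul_of_pos_right (hM x hx t ht) (Real.exp_pos _)
      have h5 : G ρ (ts, xs) / Real.exp (ρ * (T - t₁)) * Real.exp (ρ * (T - t₁))
          = G ρ (ts, xs) := div_mul_cancel₀ _ (ne_of_gt (Real.exp_pos _))
      linarith
    obtain ⟨M, hM⟩ := hout
    set R : ℝ := max M ‖xs‖ with hRdef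
    set K : Set (ℝ × EV d) := Icc t₁ T ×ˢ Metric.closedBall 0 R with hKdef
    have hKS : K ⊆ S := prod_mono (subset_refl _) (subset_univ _)
    have hKc : IsCompact K := isCompact_Icc.prod (isCompact_closedBall _ _)
    have htsK : (ts, xs) ∈ K :=
      ⟨htsIcc, mem_closedBall_zero_iff.2 (le_max_right _ _)⟩
    have hGcont : ContinuousOn (G ρ) K := by
      apply ContinuousOn.mul
      · exact (hw_cont.mono hKS).div hχcont.continuousOn
          (fun p hp => ne_of_gt (hχ_pos p.1 hp.1 p.2))
      · exact (Real.continuous_exp.comp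
          (continuous_const.mul (continuous_fst.sub continuous_const))).continuousOn
    obtain ⟨⟨s, y⟩, hsyK, hsy'⟩ := hKc.exists_isMaxOn ⟨(ts, xs), htsK⟩ hGcont
    have hsy := isMaxOn_iff.1 hsy'
    have hmaxS : ∀ p ∈ S, G ρ p ≤ G ρ (s, y) := by
      intro p hp
      by_cases hpx : ‖p.2‖ ≤ R
      · exact hsy p ⟨hp.1, mem_closedBall_zero_iff.2 hpx⟩
      · have hpM : M ≤ ‖p.2‖ := le_trans (le_max_left _ _) (le_of_lt (not_le.1 hpx))
        have := hM p.2 hpM p.1 hp.1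
        have hts' := hsy (ts, xs) htsK
        have hpeq : G ρ (p.1, p.2) = G ρ p := by simp
        linarith [hpeq ▸ this]
    refine ⟨s, y, hsyK.1, ?_, hmaxS⟩
    intro hsT
    have h1 : G ρ (s, y) ≤ 0 := by
      simp only [hGdef, hsT]
      apply mul_nonpos_of_nonpos_of_nonneg
      · exact div_nonpos_of_nonpos_of_nonneg (hw_T y) (le_of_lt (hχ_pos T (by constructor <;> linarith) y))
      · exact le_of_lt (Real.exp_pos _)
    have h2 := hmaxS (ts, xs) ⟨htsIcc, mem_univ _⟩
    linarith
  -- Step 4: dichotomy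
  by_cases hint : ∃ ρ : ℝ, 0 < ρ ∧ ∃ s y, s ∈ Ioo t₁ T ∧ ∀ p ∈ S, G ρ p ≤ G ρ (s, y)
  · -- Main case: interior maximum; build the test function and contradict the supersolution
    obtain ⟨ρ, hρ, s, y, hsIoo, hmax⟩ := hint
    have hsIcc : s ∈ Icc t₁ T := Ioo_subset_Icc_self hsIoo
    have hχsy : 0 < χ s y := hχ_pos s hsIcc y
    have hm'pos : 0 < G ρ (s, y) := by
      have := hmax (ts, xs) ⟨htsIcc, mem_univ _⟩
      have : 0 < G ρ (ts, xs) := mul_pos hcpos (Real.exp_pos _)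
      linarith [hmax (ts, xs) ⟨htsIcc, mem_univ _⟩]
    set m' : ℝ := G ρ (s, y) with hm'def
    have hwsy : 0 < w s y := by
      have h1 : 0 < w s y / χ s y := by
        by_contra h
        push_neg at h
        have : m' ≤ 0 := mul_nonpos_of_nonpos_of_nonneg h (le_of_lt (Real.exp_pos _))
        linarith
      exact (div_pos_iff.1 h1).resolve_right (fun h => absurd hχsy (not_lt.2 (le_of_lt h.2))) |>.1
    -- the multiplier Λ
    set A : ℝ := m' * Real.exp (ρ * t₁) with hAdef
    set Λ : ℝ → ℝ := fun t => A * Real.exp (-ρ * t) with hΛdef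
    have hΛeq : ∀ t, Λ t = m' * Real.exp (-(ρ * (t - t₁))) := by
      intro t
      simp only [hΛdef, hAdef]
      rw [mul_assoc, ← Real.exp_add]
      ring_nf
    have hΛpos : ∀ t, 0 < Λ t := fun t => by
      rw [hΛeq]; exact mul_pos hm'pos (Real.exp_pos _)
    have hΛderivAt : ∀ t : ℝ, HasDerivAt Λ (-ρ * Λ t) t := by
      intro t
      have h1 : HasDerivAt (fun u : ℝ => -ρ * u) (-ρ) t := by
        simpa using (hasDerivAt_id t).const_mul (-ρ)
      have h2 := (h1.exp).const_mul A
      exact h2.congr_deriv (by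
        show A * (Real.exp (-ρ * t) * -ρ) = -ρ * (A * Real.exp (-ρ * t))
        ring)
    have hΛdiff : Differentiable ℝ Λ := fun t => (hΛderivAt t).differentiableAt
    have hΛderiv : ∀ t, deriv Λ t = -ρ * Λ t := fun t => (hΛderivAt t).deriv
    have hΛ'cont : Continuous (deriv Λ) := by
      have : deriv Λ = fun t => -ρ * Λ t := funext hΛderiv
      rw [this]
      exact continuous_const.mul (continuous_const.mul
        (Real.continuous_exp.comp (continuous_const.mul continuous_id)))
    set φ : ℝ → EV d → ℝ := fun t x => Λ t * χ t x with hφdef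
    have hφC12 : IsC12 d φ := isC12_smul χ hχ_C12 Λ hΛdiff hΛ'cont
    -- w s y = Λ s * χ s y
    have heq : w s y = Λ s * χ s y := by
      rw [hΛeq s]
      have hm : m' = w s y / χ s y * Real.exp (ρ * (s - t₁)) := rfl
      rw [hm, Real.exp_neg]
      field_simp
    -- global max of w - φ on S at (s,y)
    have hmaxφ : IsMaxOn (fun p : ℝ × EV d => w p.1 p.2 - φ p.1 p.2) S (s, y) := by
      rw [isMaxOn_iff]
      intro p hp
      simp only [Set.mem_setOf_eq, hφdef]
      have hχp : 0 < χ p.1 p.2 := hχ_pos p.1 hp.1 p.2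
      have hGp := hmax p hp
      have hE : (0:ℝ) < Real.exp (ρ * (p.1 - t₁)) := Real.exp_pos _
      have h1 : w p.1 p.2 / χ p.1 p.2 ≤ m' / Real.exp (ρ * (p.1 - t₁)) :=
        (le_div_iff₀ hE).2 hGp
      have h2 : m' / Real.exp (ρ * (p.1 - t₁)) = Λ p.1 := by
        rw [hΛeq, Real.exp_neg, div_eq_mul_inv]
      have h3 : w p.1 p.2 ≤ Λ p.1 * χ p.1 p.2 := by
        rw [← h2]
        exact (div_le_iff₀ hχp).1 h1
      rw [heq]
      linarith
    have hlocmax : IsLocalMaxOn (fun p : ℝ × EV d => w p.1 p.2 - φ p.1 p.2)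
        (Ioo t₁ T ×ˢ univ) (s, y) := by
      have hsub : (Ioo t₁ T ×ˢ univ : Set (ℝ × EV d)) ⊆ S :=
        prod_mono Ioo_subset_Icc_self (subset_refl _)
      exact (hmaxφ.on_subset hsub).localize
    have hmin := hw_subsol φ hφC12 s y hsIoo hlocmax
    -- the first component is positive, so the second is ≤ 0
    have hsecond : -(timeDeriv d φ s y) - Lop d b σ φ s y - κ * |w s y|
        - κ * ‖sigGrad d σ φ s y‖ ≤ 0 := by
      rcases min_le_iff.1 hmin with h | h
      · linarith
      · exact h
    -- compute everything
    have htd : timeDeriv d φ s y = -ρ * Λ s * χ s y + Λ s * timeDeriv d χ s y := by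
      have := timeDeriv_smul χ hχ_C12.2.1 Λ hΛdiff s y
      rw [hφdef, this, hΛderiv]
    have hLop : Lop d b σ φ s y = Λ s * Lop d b σ χ s y :=
      Lop_smul b σ χ hχ_C12.2.2.1 Λ s y
    have hsg : ‖sigGrad d σ φ s y‖ = Λ s * ‖sigGrad d σ χ s y‖ := by
      rw [hφdef]
      rw [sigGrad_smul σ χ hχ_C12.2.2.1 Λ s y, norm_smul]
      rw [Real.norm_eq_abs, abs_of_pos (hΛpos s)]
    have habs : |w s y| = Λ s * χ s y := by rw [abs_of_pos hwsy, heq]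
    have hsuper := hχ_supersol s hsIcc y
    rw [htd, hLop, hsg, habs] at hsecond
    have hΛs := hΛpos s
    nlinarith [mul_pos hΛs hsuper, mul_pos (mul_pos hρ hΛs) hχsy]
  · -- Boundary case: for all ρ the max is at t₁, giving w/χ ≤ B e^{-ρ(t-t₁)} → contradiction
    push_neg at hint
    have hub : ∀ ρ : ℝ, 0 < ρ → G ρ (ts, xs) ≤ B := by
      intro ρ hρ
      obtain ⟨s, y, hsIcc, hsT, hmax⟩ := hGmax ρ hρ
      have hst₁ : s = t₁ := by
        by_contra hne
        have hs1 : t₁ < s := lt_of_le_of_ne hsIcc.1 (Ne.symm hne)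
        have hs2 : s < T := lt_of_le_of_ne hsIcc.2 hsT
        obtain ⟨p, hpS, hplt⟩ := hint ρ hρ s y ⟨hs1, hs2⟩
        exact absurd (hmax p hpS) (not_le.2 hplt)
      have h1 : G ρ (s, y) = w t₁ y / χ t₁ y := by
        simp [hGdef, hst₁]
      have h2 : w t₁ y / χ t₁ y ≤ B := hB t₁ ⟨le_refl _, le_of_lt ht₁T⟩ y
      have h3 := hmax (ts, xs) ⟨htsIcc, mem_univ _⟩
      linarith [h1 ▸ h3]
    have hexp1 : 1 < Real.exp (ts - t₁) := Real.one_lt_exp_iff.2 (by linarith [htsIoo.1])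
    obtain ⟨n, hn⟩ := pow_unbounded_of_one_lt (B / c) hexp1
    have hρpos : (0:ℝ) < (n : ℝ) + 1 := by positivity
    have h1 := hub ((n : ℝ) + 1) hρpos
    have h2 : G ((n:ℝ)+1) (ts, xs) = c * Real.exp (ts - t₁) ^ (n+1) := by
      simp only [hGdef, hcdef]
      rw [← Real.exp_nat_mul]
      push_cast
      ring_nf
    have h3 : Real.exp (ts - t₁) ^ n ≤ Real.exp (ts - t₁) ^ (n+1) :=
      pow_le_pow_right₀ (le_of_lt hexp1) (Nat.le_succ n)
    have h4 : B < c * Real.exp (ts - t₁) ^ n := by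
      have h := (div_lt_iff₀ hcpos).1 hn
      nlinarith
    have h5 : c * Real.exp (ts - t₁) ^ n ≤ c * Real.exp (ts - t₁) ^ (n + 1) :=
      mul_le_mul_of_nonneg_left h3 (le_of_lt hcpos)
    rw [h2] at h1
    linarith
end
end

section
/- Two-barrier reflection inequality (intermediate claim in the proof of Lemma 2.4): let p ∈ (1,2) and let Y, Y', L, L' : [0,T] → ℝ be continuous functions with Y(s) ≥ L(s) and Y'(s) ≥ L'(s) for all s ∈ [0,T]. Let μ and μ' be finite Borel measures on [0,T] such that μ({s : Y(s) ≠ L(s)}) = 0 and μ'({s : Y'(s) ≠ L'(s)}) = 0. Then ∫_{[0,T]} θ_p(Y(s) − Y'(s)) μ(ds) − ∫_{[0,T]} θ_p(Y(s) − Y'(s)) μ'(ds) ≤ ∫_{[0,T]} θ_p(L(s) − L'(s)) μ(ds) − ∫_{[0,T]} θ_p(L(s) − L'(s)) μ'(ds). -/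
open Set MeasureTheory

noncomputable section

/-- The signed power function `θ_p(x) = |x|^{p-1} sgn(x)`
(i.e. `θ_p(x) = |x|^{p-2} x` for `x ≠ 0` and `θ_p(0) = 0`). -/
noncomputable def thetaP (p : ℝ) (x : ℝ) : ℝ := |x| ^ (p - 1) * Real.sign x

lemma thetaP_mono {p : ℝ} (hp : 1 < p) : Monotone (thetaP p) := by
  have hr : 0 < p - 1 := by linarith
  intro x y hxy
  unfold thetaP
  rcases lt_trichotomy x 0 with hx | hx | hx
  · rcases lt_trichotomy y 0 with hy | hy | hy
    · rw [Real.sign_of_neg hx, Real.sign_of_neg hy]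
      have : |y| ≤ |x| := by rw [abs_of_neg hx, abs_of_neg hy]; linarith
      have := Real.rpow_le_rpow (abs_nonneg y) this hr.le
      nlinarith [Real.rpow_nonneg (abs_nonneg y) (p-1)]
    · rw [hy, Real.sign_zero, Real.sign_of_neg hx]
      nlinarith [Real.rpow_nonneg (abs_nonneg x) (p-1)]
    · rw [Real.sign_of_neg hx, Real.sign_of_pos hy]
      nlinarith [Real.rpow_nonneg (abs_nonneg x) (p-1),
        Real.rpow_nonneg (abs_nonneg y) (p-1)]
  · subst hx
    rw [Real.sign_zero]
    rcases eq_or_lt_of_le hxy with h | h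
    · rw [← h, Real.sign_zero]
    · rw [Real.sign_of_pos h]
      nlinarith [Real.rpow_nonneg (abs_nonneg y) (p-1)]
  · have hy : 0 < y := lt_of_lt_of_le hx hxy
    rw [Real.sign_of_pos hx, Real.sign_of_pos hy]
    have : |x| ≤ |y| := by rw [abs_of_pos hx, abs_of_pos hy]; exact hxy
    have := Real.rpow_le_rpow (abs_nonneg x) this hr.le
    linarith

lemma measurable_thetaP {p : ℝ} (hp : 1 < p) : Measurable (thetaP p) := by
  unfold thetaP
  have hsign : Measurable Real.sign := by
    have : Real.sign = fun r : ℝ =>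
        if r < 0 then (-1 : ℝ) else if 0 < r then 1 else 0 := by
      funext r; rfl
    rw [this]
    exact (measurable_const.ite measurableSet_Iio
      (measurable_const.ite measurableSet_Ioi measurable_const)).comp measurable_id
  have habs : Continuous fun x : ℝ => |x| ^ (p - 1) :=
    (continuous_abs).rpow_const (fun x => Or.inr (by linarith))
  exact habs.measurable.mul hsign

lemma abs_thetaP_le {p : ℝ} (hp : 1 < p) {x C : ℝ} (hC : |x| ≤ C) :
    |thetaP p x| ≤ C ^ (p - 1) := by
  unfold thetaP
  rw [abs_mul]
  have h1 : |Real.sign x| ≤ 1 := by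
    rcases Real.sign_apply_eq x with h | h | h <;> rw [h] <;> norm_num
  have h2 : |(|x| ^ (p - 1))| ≤ C ^ (p - 1) := by
    rw [abs_of_nonneg (Real.rpow_nonneg (abs_nonneg x) _)]
    exact Real.rpow_le_rpow (abs_nonneg x) hC (by linarith)
  calc |(|x| ^ (p - 1))| * |Real.sign x| ≤ C ^ (p - 1) * 1 := by
        apply mul_le_mul h2 h1 (abs_nonneg _)
          (le_trans (abs_nonneg _) h2)
    _ = C ^ (p - 1) := mul_one _

lemma integrableOn_thetaP_comp {p : ℝ} (hp : 1 < p) {T : ℝ}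
    {f : ℝ → ℝ} (hf : ContinuousOn f (Icc 0 T))
    (μ : Measure ℝ) [IsFiniteMeasure μ] :
    IntegrableOn (fun s => thetaP p (f s)) (Icc 0 T) μ := by
  obtain ⟨C, hC⟩ : ∃ C, ∀ s ∈ Icc (0:ℝ) T, |f s| ≤ C := by
    rcases isCompact_Icc.bddAbove_image (hf.norm) with ⟨C, hC⟩
    exact ⟨C, fun s hs => hC ⟨s, hs, rfl⟩⟩
  have hmeas : AEStronglyMeasurable (fun s => thetaP p (f s)) (μ.restrict (Icc 0 T)) := by
    have : AEMeasurable f (μ.restrict (Icc 0 T)) :=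
      hf.aemeasurable measurableSet_Icc
    exact ((measurable_thetaP hp).comp_aemeasurable this).aestronglyMeasurable
  refine Integrable.mono' (integrable_const (C ^ (p - 1))) hmeas ?_
  filter_upwards [ae_restrict_mem measurableSet_Icc] with s hs
  exact abs_thetaP_le hp (hC s hs)

/-- **Two-barrier reflection inequality** (intermediate claim in the proof of Lemma 2.4):
if `Y ≥ L`, `Y' ≥ L'`, `μ` is carried by `{Y = L}` and `μ'` by `{Y' = L'}`, then
`∫ θ_p(Y - Y') dμ - ∫ θ_p(Y - Y') dμ' ≤ ∫ θ_p(L - L') dμ - ∫ θ_p(L - L') dμ'`. -/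
theorem two_barrier_reflection_inequality
    (T : ℝ) (hT : 0 < T) (p : ℝ) (hp : p ∈ Set.Ioo (1 : ℝ) 2)
    (Y Y' L L' : ℝ → ℝ)
    (hY : ContinuousOn Y (Icc 0 T)) (hY' : ContinuousOn Y' (Icc 0 T))
    (hL : ContinuousOn L (Icc 0 T)) (hL' : ContinuousOn L' (Icc 0 T))
    (hYL : ∀ s ∈ Icc 0 T, L s ≤ Y s) (hY'L' : ∀ s ∈ Icc 0 T, L' s ≤ Y' s)
    (μ μ' : Measure ℝ) [IsFiniteMeasure μ] [IsFiniteMeasure μ']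
    (hμ : μ {s ∈ Icc 0 T | Y s ≠ L s} = 0)
    (hμ' : μ' {s ∈ Icc 0 T | Y' s ≠ L' s} = 0) :
    (∫ s in Icc 0 T, thetaP p (Y s - Y' s) ∂μ) - (∫ s in Icc 0 T, thetaP p (Y s - Y' s) ∂μ')
      ≤ (∫ s in Icc 0 T, thetaP p (L s - L' s) ∂μ)
        - (∫ s in Icc 0 T, thetaP p (L s - L' s) ∂μ') := by
  have hp1 := hp.1
  have hYY' := hY.sub hY'
  have hLL' := hL.sub hL'
  -- μ-a.e. on Icc, Y = L
  have hμae : ∀ᵐ s ∂(μ.restrict (Icc 0 T)), Y s = L s := by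
    rw [ae_restrict_iff' measurableSet_Icc]
    rw [ae_iff]
    refine measure_mono_null (fun s hs => ?_) hμ
    simp only [Set.mem_setOf_eq, not_forall] at hs ⊢
    obtain ⟨h1, h2⟩ := hs
    exact ⟨h1, h2⟩
  have hμ'ae : ∀ᵐ s ∂(μ'.restrict (Icc 0 T)), Y' s = L' s := by
    rw [ae_restrict_iff' measurableSet_Icc, ae_iff]
    refine measure_mono_null (fun s hs => ?_) hμ'
    simp only [Set.mem_setOf_eq, not_forall] at hs ⊢
    obtain ⟨h1, h2⟩ := hs
    exact ⟨h1, h2⟩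
  have h1 : (∫ s in Icc 0 T, thetaP p (Y s - Y' s) ∂μ)
      ≤ ∫ s in Icc 0 T, thetaP p (L s - L' s) ∂μ := by
    refine setIntegral_mono_ae_restrict
      (integrableOn_thetaP_comp hp1 hYY' μ)
      (integrableOn_thetaP_comp hp1 hLL' μ) ?_
    filter_upwards [hμae, ae_restrict_mem measurableSet_Icc] with s hYL' hs
    apply thetaP_mono hp1
    have := hY'L' s hs
    rw [hYL']
    linarith
  have h2 : (∫ s in Icc 0 T, thetaP p (L s - L' s) ∂μ')
      ≤ ∫ s in Icc 0 T, thetaP p (Y s - Y' s) ∂μ' := by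
    refine setIntegral_mono_ae_restrict
      (integrableOn_thetaP_comp hp1 hLL' μ')
      (integrableOn_thetaP_comp hp1 hYY' μ') ?_
    filter_upwards [hμ'ae, ae_restrict_mem measurableSet_Icc] with s hY'eq hs
    apply thetaP_mono hp1
    have := hYL s hs
    rw [hY'eq]
    linarith
  linarith
end
end
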